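/- For every integer t ≥ 1 there exists a binary LCD [15t+13, 4, 8t+6] code, i.e., a 4-dimensional linear complementary dual subspace of F_2^(15t+13) with minimum weight 8t+6. -/

import Mathlib

/-- The (Hamming) weight of a vector over `F_2`. -/
def wt {n : ℕ} (x : Fin n → ZMod 2) : ℕ :=
  Finset.card (Finset.univ.filter fun i => x i ≠ 0)

/-- The dual code of a binary code `C`, with respect to the standard inner product. -/
def dualCode {n : ℕ} (C : Submodule (ZMod 2) (Fin n → ZMod 2)) :
    Submodule (ZMod 2) (Fin n → ZMod 2) where
  carrier := {x | ∀ y ∈ C, ∑ i, x i * y i = 0}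
  add_mem' := by
    intro a b ha hb y hy
    simp [Pi.add_apply, add_mul, Finset.sum_add_distrib, ha y hy, hb y hy]
  zero_mem' := by
    intro y hy
    simp
  smul_mem' := by
    intro c a ha y hy
    simp only [Pi.smul_apply, smul_eq_mul, mul_assoc, ← Finset.mul_sum, ha y hy, mul_zero]

/-- A binary code is linear complementary dual (LCD) if it meets its dual trivially. -/
def IsLCD {n : ℕ} (C : Submodule (ZMod 2) (Fin n → ZMod 2)) : Prop :=
  C ⊓ dualCode C = ⊥

/-- The minimum weight of a binary code: the smallest weight of a nonzero codeword. -/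
noncomputable def minWt {n : ℕ} (C : Submodule (ZMod 2) (Fin n → ZMod 2)) : ℕ :=
  sInf {w | ∃ x ∈ C, x ≠ 0 ∧ wt x = w}

/-- `dLCD n k` is the largest minimum weight among all binary LCD `[n,k]` codes. -/
noncomputable def dLCD (n k : ℕ) : ℕ :=
  sSup {d | ∃ C : Submodule (ZMod 2) (Fin n → ZMod 2),
    Module.finrank (ZMod 2) C = k ∧ IsLCD C ∧ minWt C = d}

namespace LCDaux
open Finset

/-- Rows of a generator matrix of the `[15,4,8]` simplex code:
column `c` is the binary expansion of `c+1`. -/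
def srow (j : Fin 4) (c : Fin 15) : ZMod 2 := if Nat.testBit (c.val + 1) j.val then 1 else 0

/-- Rows (encoded as bitmasks) of a generator matrix of an LCD `[13,4,6]` code. -/
def trow (j : Fin 4) (b : Fin 13) : ZMod 2 :=
  if Nat.testBit (![7374, 7719, 2709, 4395] j) b.val then 1 else 0

/-- Simplex codeword of a message `m`. -/
def cw (m : Fin 4 → ZMod 2) (c : Fin 15) : ZMod 2 := ∑ j, m j * srow j c

/-- Tail codeword of a message `m`. -/
def tw (m : Fin 4 → ZMod 2) (b : Fin 13) : ZMod 2 := ∑ j, m j * trow j b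

lemma fact1 : ∀ m : Fin 4 → ZMod 2, m ≠ 0 →
    (univ.filter fun c : Fin 15 => cw m c ≠ 0).card = 8 := by decide

lemma fact2 : ∀ (m : Fin 4 → ZMod 2) (j : Fin 4), ∑ c, cw m c * srow j c = 0 := by decide

lemma fact3 : ∀ m : Fin 4 → ZMod 2, m ≠ 0 →
    6 ≤ (univ.filter fun b : Fin 13 => tw m b ≠ 0).card := by decide

lemma fact4 : (univ.filter fun b : Fin 13 => tw ![1,1,0,0] b ≠ 0).card = 6 := by decide

lemma fact5 : ∀ m : Fin 4 → ZMod 2, (∀ j, ∑ b, tw m b * trow j b = 0) → m = 0 := by decide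

lemma cw_single : ∀ (j : Fin 4) (c : Fin 15), cw (Pi.single j 1) c = srow j c := by decide

lemma tw_single : ∀ (j : Fin 4) (b : Fin 13), tw (Pi.single j 1) b = trow j b := by decide

/-- Splitting of the coordinates into `t` simplex blocks and a tail block. -/
def idx (t : ℕ) : Fin (15 * t + 13) ≃ (Fin t × Fin 15) ⊕ Fin 13 :=
  (finCongr (by ring)).trans ((finSumFinEquiv (m := t * 15) (n := 13)).symm.trans
    (Equiv.sumCongr finProdFinEquiv.symm (Equiv.refl _)))

/-- The encoding map of the `[15t+13, 4]` code. -/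
def Φ (t : ℕ) : (Fin 4 → ZMod 2) →ₗ[ZMod 2] (Fin (15 * t + 13) → ZMod 2) :=
  Matrix.vecMulLinear (Matrix.of fun j i =>
    Sum.elim (fun q : Fin t × Fin 15 => srow j q.2) (trow j) (idx t i))

lemma Φ_apply (t : ℕ) (m : Fin 4 → ZMod 2) (i : Fin (15 * t + 13)) :
    Φ t m i = Sum.elim (fun q : Fin t × Fin 15 => cw m q.2) (tw m) (idx t i) := by
  have h1 : Φ t m i = ∑ j, m j *
      Sum.elim (fun q : Fin t × Fin 15 => srow j q.2) (trow j) (idx t i) := by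
    simp [Φ, Matrix.vecMulLinear_apply, Matrix.vecMul, dotProduct, Matrix.of_apply]
  rw [h1]
  cases h : idx t i with
  | inl q => simp only [Sum.elim_inl, cw]
  | inr b => simp only [Sum.elim_inr, tw]

lemma ip_eq (t : ℕ) (m : Fin 4 → ZMod 2) (j : Fin 4) :
    ∑ i, Φ t m i * Φ t (Pi.single j 1) i = ∑ b, tw m b * trow j b := by
  have key : ∀ i, Φ t m i * Φ t (Pi.single j 1) i =
      (fun p : (Fin t × Fin 15) ⊕ Fin 13 =>
        Sum.elim (fun q : Fin t × Fin 15 => cw m q.2 * srow j q.2)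
          (fun b => tw m b * trow j b) p) (idx t i) := by
    intro i
    rw [Φ_apply, Φ_apply]
    cases h : idx t i with
    | inl q => simp [cw_single]
    | inr b => simp [tw_single]
  rw [Finset.sum_congr rfl (fun i _ => key i), Equiv.sum_comp (idx t),
    Fintype.sum_sum_type]
  simp only [Sum.elim_inl, Sum.elim_inr]
  rw [Fintype.sum_prod_type]
  simp [fact2 m j]

lemma wt_eq (t : ℕ) (m : Fin 4 → ZMod 2) :
    wt (Φ t m) = t * (univ.filter fun c : Fin 15 => cw m c ≠ 0).card
      + (univ.filter fun b : Fin 13 => tw m b ≠ 0).card := by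
  unfold wt
  rw [Finset.card_filter]
  have key : ∀ i, (if Φ t m i ≠ 0 then 1 else 0) =
      (fun p : (Fin t × Fin 15) ⊕ Fin 13 =>
        Sum.elim (fun q : Fin t × Fin 15 => if cw m q.2 ≠ 0 then 1 else 0)
          (fun b => if tw m b ≠ 0 then 1 else 0) p) (idx t i) := by
    intro i
    rw [Φ_apply]
    cases h : idx t i with
    | inl q => simp only [Sum.elim_inl]; exact if_congr Iff.rfl rfl rfl
    | inr b => simp only [Sum.elim_inr]; exact if_congr Iff.rfl rfl rfl
  rw [Finset.sum_congr rfl (fun i _ => key i), Equiv.sum_comp (idx t),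
    Fintype.sum_sum_type]
  simp only [Sum.elim_inl, Sum.elim_inr]
  rw [Fintype.sum_prod_type]
  simp only [← Finset.card_filter]
  rw [Finset.sum_const, Finset.card_univ, Fintype.card_fin, smul_eq_mul]

lemma wt_lower (t : ℕ) (m : Fin 4 → ZMod 2) (hm : m ≠ 0) :
    8 * t + 6 ≤ wt (Φ t m) := by
  rw [wt_eq, fact1 m hm]
  have := fact3 m hm
  omega

lemma wt_zero (t : ℕ) : wt (0 : Fin (15 * t + 13) → ZMod 2) = 0 := by
  unfold wt; simp

lemma Φ_inj (t : ℕ) : Function.Injective (Φ t) := by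
  rw [← LinearMap.ker_eq_bot, LinearMap.ker_eq_bot']
  intro m hm
  by_contra hne
  have h1 := wt_lower t m hne
  rw [hm, wt_zero] at h1
  omega

end LCDaux

theorem exists_lcd_15t13 (t : ℕ) (ht : 1 ≤ t) :
    ∃ C : Submodule (ZMod 2) (Fin (15 * t + 13) → ZMod 2),
      Module.finrank (ZMod 2) C = 4 ∧ IsLCD C ∧ minWt C = 8 * t + 6 := by
  classical
  refine ⟨LinearMap.range (LCDaux.Φ t), ?_, ?_, ?_⟩
  · rw [LinearMap.finrank_range_of_inj (LCDaux.Φ_inj t)]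
    simp
  · rw [IsLCD, eq_bot_iff]
    rintro x hx
    obtain ⟨hxC, hxD⟩ := Submodule.mem_inf.mp hx
    obtain ⟨m, rfl⟩ := hxC
    have hm : m = 0 := by
      apply LCDaux.fact5
      intro j
      have hy : LCDaux.Φ t (Pi.single j 1) ∈ LinearMap.range (LCDaux.Φ t) := ⟨_, rfl⟩
      have h0 := hxD _ hy
      rwa [LCDaux.ip_eq] at h0
    rw [hm, map_zero]
    exact Submodule.zero_mem ⊥
  · have hmem : 8 * t + 6 ∈
        {w | ∃ x ∈ LinearMap.range (LCDaux.Φ t), x ≠ 0 ∧ wt x = w} := by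
      refine ⟨LCDaux.Φ t ![1,1,0,0], ⟨_, rfl⟩, ?_, ?_⟩
      · intro h
        have h2 := LCDaux.Φ_inj t (h.trans (map_zero (LCDaux.Φ t)).symm)
        exact (by decide : (![1,1,0,0] : Fin 4 → ZMod 2) ≠ 0) h2
      · rw [LCDaux.wt_eq, LCDaux.fact1 _ (by decide), LCDaux.fact4]
        ring
    unfold minWt
    apply le_antisymm
    · exact Nat.sInf_le hmem
    · apply le_csInf ⟨_, hmem⟩
      rintro w ⟨x, hxC, hx0, rfl⟩
      obtain ⟨m, rfl⟩ := hxC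
      have hm : m ≠ 0 := fun h => hx0 (by rw [h, map_zero])
      exact LCDaux.wt_lower t m hm
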